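/- In a two-level hierarchical FSM where every level-2 state-changing operation emits exactly one corresponding level-1 operation call (Rule 2), and level-1 direct incoming operations to the sub-branch's entry state call the level-2 re-initiation operation, while indirect incoming operations (those triggered by level-2 emissions) do not (Rule 3), any single user-initiated operation triggers only finitely many operation calls (no infinite callback loop). -/

import Mathlib

/-- Call graph of a two-level hierarchical FSM. Vertices are operations with a
level (1 or 2) and kinds SCO / DIO / IIO. Every edge either goes from a level-2
SCO to a level-1 IIO (the emitted call of Rule 2), or from a level-1 DIO to a
level-2 SCO (the re-initiation call of Rule 3); level-1 IIOs have no outgoing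
edges (DIO and IIO are disjoint). Then every path in the call graph has at most
3 vertices (hence any single user-initiated operation triggers only finitely
many calls: no infinite callback loop). -/
theorem stmt5 (V : Type) (lvl : V → ℕ) (SCO DIO IIO : V → Prop)
    (E : V → V → Prop)
    (hE : ∀ u v, E u v →
      (lvl u = 2 ∧ SCO u ∧ lvl v = 1 ∧ IIO v) ∨
      (lvl u = 1 ∧ DIO u ∧ lvl v = 2 ∧ SCO v))
    (hdisj : ∀ v, ¬ (DIO v ∧ IIO v)) :
    ∀ l : List V, l.Chain' E → l.length ≤ 3 := by
  intro l hl
  by_contra h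
  push_neg at h
  obtain ⟨a, b, c, d, t, rfl⟩ : ∃ a b c d t, l = a :: b :: c :: d :: t := by
    rcases l with _ | ⟨a, _ | ⟨b, _ | ⟨c, _ | ⟨d, t⟩⟩⟩⟩ <;>
      first
      | (exact ⟨a, b, c, d, t, rfl⟩)
      | (simp at h)
  obtain ⟨h1, h2, h3, -⟩ : E a b ∧ E b c ∧ E c d ∧ List.Chain' E (d :: t) := by
    simpa [List.Chain', List.isChain_cons_cons] using hl
  rcases hE a b h1 with ⟨-, -, hb1, hbI⟩ | ⟨-, -, hb2, -⟩
  · rcases hE b c h2 with ⟨hb2, -⟩ | ⟨-, hbD, -⟩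
    · omega
    · exact hdisj b ⟨hbD, hbI⟩
  · rcases hE b c h2 with ⟨-, -, hc1, hcI⟩ | ⟨hb1, -⟩
    · rcases hE c d h3 with ⟨hc2, -⟩ | ⟨-, hcD, -⟩
      · omega
      · exact hdisj c ⟨hcD, hcI⟩
    · omega
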